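/- If F : 2^X → ℝ is non-negative, monotone, and submodular on a finite ground set X, and A^G is the set of size k produced by greedy maximization (iteratively adding the element with the largest marginal gain), then F(A^G) ≥ (1 - 1/e) · max over subsets A of size at most k of F(A). -/

import Mathlib

lemma marg_sum {α : Type*} [DecidableEq α] (F : Finset α → ℝ)
    (hmono : ∀ A B : Finset α, A ⊆ B → F A ≤ F B)
    (hsub : ∀ (A B : Finset α) (i : α), A ⊆ B → i ∉ B →
      F (insert i B) - F B ≤ F (insert i A) - F A)
    (A S : Finset α) :
    F (A ∪ S) - F A ≤ ∑ i ∈ S, (F (insert i A) - F A) := by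
  induction S using Finset.induction with
  | empty => simp
  | @insert j T hj ih =>
    rw [Finset.sum_insert hj]
    have h1 : F (A ∪ insert j T) - F (A ∪ T) ≤ F (insert j A) - F A := by
      by_cases hjA : j ∈ A ∪ T
      · have he : A ∪ insert j T = A ∪ T := by
          rw [Finset.union_insert, Finset.insert_eq_self.mpr hjA]
        rw [he]
        have := hmono A (insert j A) (Finset.subset_insert _ _)
        linarith
      · have := hsub A (A ∪ T) j Finset.subset_union_left hjA
        rw [Finset.union_insert]
        exact this
    linarith

/-- Greedy maximization of a non-negative monotone submodular function achieves
a `(1 - 1/e)` approximation of the best set of size at most `k`. -/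
theorem greedy_max_guarantee {α : Type*} [Fintype α] [DecidableEq α]
    (F : Finset α → ℝ)
    (hnn : ∀ A : Finset α, 0 ≤ F A)
    (hmono : ∀ A B : Finset α, A ⊆ B → F A ≤ F B)
    (hsub : ∀ (A B : Finset α) (i : α), A ⊆ B → i ∉ B →
      F (insert i B) - F B ≤ F (insert i A) - F A)
    (k : ℕ) (AG : ℕ → Finset α)
    (h0 : AG 0 = ∅)
    (hstep : ∀ m < k, ∃ i ∉ AG m, AG (m + 1) = insert i (AG m) ∧
      ∀ j ∉ AG m, F (insert j (AG m)) - F (AG m) ≤ F (insert i (AG m)) - F (AG m))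
    (Astar : Finset α) (hA : Astar.card ≤ k)
    (hopt : ∀ B : Finset α, B.card ≤ k → F B ≤ F Astar) :
    (1 - Real.exp (-1)) * F Astar ≤ F (AG k) := by
  rcases Nat.eq_zero_or_pos k with hk | hk
  · subst hk
    have hAe : Astar = ∅ := Finset.card_eq_zero.mp (Nat.le_zero.mp hA)
    subst hAe
    rw [h0]
    nlinarith [hnn (∅ : Finset α), Real.exp_pos (-1)]
  · have hkR : (0:ℝ) < k := by exact_mod_cast hk
    have hk1 : (1:ℝ) ≤ (k:ℝ) := by exact_mod_cast hk
    have hq : (0:ℝ) ≤ 1 - 1/(k:ℝ) := by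
      have : 1/(k:ℝ) ≤ 1 := by rw [div_le_one hkR]; exact hk1
      linarith
    set OPT := F Astar with hOPTdef
    have hOPT : 0 ≤ OPT := hnn _
    have key : ∀ m < k, OPT - F (AG (m+1)) ≤ (1 - 1/k) * (OPT - F (AG m)) := by
      intro m hm
      obtain ⟨i, hi, hAG, hbest⟩ := hstep m hm
      set g := F (insert i (AG m)) - F (AG m) with hg
      have hg0 : 0 ≤ g := by
        have := hmono (AG m) (insert i (AG m)) (Finset.subset_insert _ _)
        simp only [hg]; linarith
      have h1 : OPT ≤ F (AG m) + (k:ℝ) * g := by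
        have h2 : OPT ≤ F (AG m ∪ Astar) :=
          hmono _ _ Finset.subset_union_right
        have h3 := marg_sum F hmono hsub (AG m) (Astar \ AG m)
        rw [Finset.union_sdiff_self_eq_union] at h3
        have h4 : ∑ j ∈ Astar \ AG m, (F (insert j (AG m)) - F (AG m))
            ≤ ((Astar \ AG m).card : ℝ) * g := by
          have := Finset.sum_le_card_nsmul (Astar \ AG m)
            (fun j => F (insert j (AG m)) - F (AG m)) g
            (fun j hjm => hbest j (Finset.mem_sdiff.mp hjm).2)
          simpa [nsmul_eq_mul] using this
        have h5 : ((Astar \ AG m).card : ℝ) ≤ (k : ℝ) := by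
          have : (Astar \ AG m).card ≤ Astar.card :=
            Finset.card_le_card (Finset.sdiff_subset)
          exact_mod_cast le_trans this hA
        nlinarith
      have h6 : F (AG (m+1)) = F (AG m) + g := by rw [hAG]; simp [hg]
      have h7 : (OPT - F (AG m)) / k ≤ g := by
        rw [div_le_iff₀ hkR]; nlinarith
      have h8 : (1 - 1/(k:ℝ)) * (OPT - F (AG m))
          = (OPT - F (AG m)) - (OPT - F (AG m)) / k := by
        field_simp
      rw [h8, h6]; linarith
    have hind : ∀ m, m ≤ k → OPT - F (AG m) ≤ (1 - 1/(k:ℝ))^m * OPT := by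
      intro m
      induction m with
      | zero =>
        intro _
        have := hnn (AG 0)
        simpa using by linarith
      | succ n ih =>
        intro hm
        have hn := ih (le_of_lt (Nat.lt_of_succ_le hm))
        have h := key n (Nat.lt_of_succ_le hm)
        calc OPT - F (AG (n+1)) ≤ (1 - 1/(k:ℝ)) * (OPT - F (AG n)) := h
          _ ≤ (1 - 1/(k:ℝ)) * ((1 - 1/(k:ℝ))^n * OPT) :=
              mul_le_mul_of_nonneg_left hn hq
          _ = (1 - 1/(k:ℝ))^(n+1) * OPT := by ring
    have hfin := hind k le_rfl
    have hexp : (1 - 1/(k:ℝ))^k ≤ Real.exp (-1) := by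
      have h1 : 1 - 1/(k:ℝ) ≤ Real.exp (-(1/(k:ℝ))) := by
        have := Real.add_one_le_exp (-(1/(k:ℝ)))
        linarith
      have h2 : (1 - 1/(k:ℝ))^k ≤ (Real.exp (-(1/(k:ℝ))))^k :=
        pow_le_pow_left₀ hq h1 k
      have h3 : (Real.exp (-(1/(k:ℝ))))^k = Real.exp (-1) := by
        rw [← Real.exp_nat_mul]
        congr 1
        field_simp
      linarith
    have : OPT - F (AG k) ≤ Real.exp (-1) * OPT := by
      calc OPT - F (AG k) ≤ (1 - 1/(k:ℝ))^k * OPT := hfin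
        _ ≤ Real.exp (-1) * OPT := mul_le_mul_of_nonneg_right hexp hOPT
    linarith
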